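/- For every E = ρ² ∈ ℂ with ρ = σ + iτ and |ρ| > max{1, 2A}, the discriminant satisfies |C(1,E) + S′(1,E) − 2cos ρ − (sin ρ/ρ)·∫₀¹V0(t)dt| ≤ 4A²e^{|τ|}/|ρ|²; that is, D(E) = 2cos ρ + (sin ρ/ρ)·∫₀¹V0(t)dt + f(ρ) with |f(ρ)| ≤ 4A²e^{|τ|}/|ρ|². -/

import Mathlib

open MeasureTheory Real Set

noncomputable section

/-- `u` is a solution of `-u'' + V0·u = E·u` in Carathéodory (integral) form,
with first derivative `u'`. -/
def IsSolution (V0 : ℝ → ℝ) (E : ℝ) (u u' : ℝ → ℝ) : Prop :=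
  (∀ x, HasDerivAt u (u' x) x) ∧
  (∀ x, u' x = u' 0 + ∫ t in (0:ℝ)..x, (V0 t - E) * u t)

/-- The cosine-type solution `C(·,E)`: `C(0,E)=1`, `C'(0,E)=0`. -/
def IsCosSolution (V0 : ℝ → ℝ) (E : ℝ) (c c' : ℝ → ℝ) : Prop :=
  IsSolution V0 E c c' ∧ c 0 = 1 ∧ c' 0 = 0

/-- The sine-type solution `S(·,E)`: `S(0,E)=0`, `S'(0,E)=1`. -/
def IsSinSolution (V0 : ℝ → ℝ) (E : ℝ) (s s' : ℝ → ℝ) : Prop :=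
  IsSolution V0 E s s' ∧ s 0 = 0 ∧ s' 0 = 1

/-- `E` satisfies the quasiperiodic eigenvalue equation `D(E) = 2 cos k`,
where `D(E) = C(1,E) + S'(1,E)` is the discriminant. -/
def IsQPEigen (V0 : ℝ → ℝ) (k E : ℝ) : Prop :=
  ∃ c c' s s' : ℝ → ℝ, IsCosSolution V0 E c c' ∧ IsSinSolution V0 E s s' ∧
    c 1 + s' 1 = 2 * Real.cos k

/-- `E = E^k_n` : the `n`-th smallest real solution of `D(E) = 2 cos k`
(there are exactly `n-1` solutions strictly below `E`). -/
def IsNthQPEigen (V0 : ℝ → ℝ) (k : ℝ) (n : ℕ) (E : ℝ) : Prop :=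
  IsQPEigen V0 k E ∧ {E' : ℝ | E' < E ∧ IsQPEigen V0 k E'}.ncard = n - 1

/-- `δ_n(k) = A e³ / (n sin k · sin(99k/100) · sin((π+99k)/100))`. -/
def deltaN (A : ℝ) (n : ℕ) (k : ℝ) : ℝ :=
  A * Real.exp 3 /
    ((n : ℝ) * (Real.sin k * Real.sin (99 * k / 100) * Real.sin ((π + 99 * k) / 100)))

/-- `a^k_n = nπ - k` for even `n`, `(n-1)π + k` for odd `n`. -/
def aNK (n : ℕ) (k : ℝ) : ℝ :=
  if Even n then (n : ℝ) * π - k else ((n : ℝ) - 1) * π + k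

/-- The threshold `1 + A/((k(π-k)/10⁴)·sin k·sin(99k/100)·sin((π+99k)/100))`. -/
def nthresh (A k : ℝ) : ℝ :=
  1 + A / ((k * (π - k) / 10 ^ 4) * Real.sin k * Real.sin (99 * k / 100) *
    Real.sin ((π + 99 * k) / 100))

/-- `L(k) = 1 + A/((k(π-k)/10⁴)·sin³k·sin(99k/100)·sin((π+99k)/100))`. -/
def bigL (A k : ℝ) : ℝ :=
  1 + A / ((k * (π - k) / 10 ^ 4) * Real.sin k ^ 3 * Real.sin (99 * k / 100) *
    Real.sin ((π + 99 * k) / 100))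

/-- `δ(k) = 40πAe³/(sin³k·sin(99k/100)·sin((π+99k)/100))`. -/
def smallDelta (A k : ℝ) : ℝ :=
  40 * π * A * Real.exp 3 /
    (Real.sin k ^ 3 * Real.sin (99 * k / 100) * Real.sin ((π + 99 * k) / 100))

/-- The normalized Floquet solution `φ(x,E) = C(x,E) + ((e^{ik} - C(1,E))/S(1,E))·S(x,E)`. -/
def floquetSol (k : ℝ) (c s : ℝ → ℝ) : ℝ → ℂ := fun x =>
  (c x : ℂ) + ((Complex.exp (Complex.I * (k : ℂ)) - (c 1 : ℂ)) / (s 1 : ℂ)) * (s x : ℂ)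

/-- `η'(x,E) = ω^k_n/(2|φ(x,E)|²) = sin k/(S(1,E)·|φ(x,E)|²)`. -/
def etaDeriv (k : ℝ) (c s : ℝ → ℝ) : ℝ → ℝ := fun x =>
  Real.sin k / (s 1 * ‖floquetSol k c s x‖ ^ 2)

/-- A Prüfer angle for the perturbation `V`: a locally absolutely continuous function
satisfying `θ' = η' - (V/η')·sin²θ` a.e. on `(0,∞)` (in integral form). -/
def IsPrueferAngle (eta V θ : ℝ → ℝ) : Prop :=
  (∀ a b : ℝ, 0 < a → a ≤ b →
      θ b - θ a = ∫ t in a..b, (eta t - V t / eta t * Real.sin (θ t) ^ 2)) ∧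
  (∀ a b : ℝ, 0 < a →
      IntervalIntegrable (fun t => eta t - V t / eta t * Real.sin (θ t) ^ 2) volume a b)

/-- `s(α,β,C) = (100·C·α^{β-1} + 10⁴)^{1/β}·α⁻¹`. -/
def sConst (α β C : ℝ) : ℝ := (100 * C * α ^ (β - 1) + 10 ^ 4) ^ (1 / β) / α

/-- `r(α,β,C) = 30·C·β⁻¹·α^{β-1} + 10π`. -/
def rConst (α β C : ℝ) : ℝ := 30 * C / β * α ^ (β - 1) + 10 * π

/-- `r(α) = s(α,2/3,1) + 4·r(α,2/3,1)·(α^{-4/3} + 3)^{1/2}`. -/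
def rA (α : ℝ) : ℝ :=
  sConst α (2 / 3) 1 + 4 * rConst α (2 / 3) 1 * Real.sqrt (α ^ (-(4 : ℝ) / 3) + 3)


namespace DiscHelper

/-- compatibility: the complex absolute value as a bundled absolute value (= the norm). -/
def Complex.abs : AbsoluteValue ℂ ℝ where
  toFun z := ‖z‖
  map_mul' := norm_mul
  nonneg' := norm_nonneg
  eq_zero' _ := norm_eq_zero
  add_le' := norm_add_le

lemma Complex.norm_eq_abs (z : ℂ) : ‖z‖ = Complex.abs z := rfl

lemma Complex.continuous_abs : Continuous Complex.abs := continuous_norm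

lemma Complex.abs_exp (z : ℂ) : Complex.abs (Complex.exp z) = Real.exp z.re := _root_.Complex.norm_exp z

lemma Complex.abs_ofReal (r : ℝ) : Complex.abs (r : ℂ) = |r| := _root_.Complex.norm_real r

lemma Complex.abs_two : Complex.abs 2 = 2 := by
  show ‖(2:ℂ)‖ = 2; simp

lemma Complex.abs_I : Complex.abs _root_.Complex.I = 1 := _root_.Complex.norm_I

lemma abs_cos_le (w : ℂ) : Complex.abs (Complex.cos w) ≤ Real.exp |w.im| := by
  rw [Complex.cos]
  have h1 : Complex.abs (Complex.exp (w * Complex.I)) = Real.exp (-w.im) := by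
    rw [Complex.abs_exp]; congr 1; simp [Complex.mul_I_re]
  have h2 : Complex.abs (Complex.exp (-w * Complex.I)) = Real.exp (w.im) := by
    rw [Complex.abs_exp]; congr 1; simp [Complex.mul_I_re]
  calc Complex.abs ((Complex.exp (w * Complex.I) + Complex.exp (-w * Complex.I)) / 2)
      ≤ (Complex.abs (Complex.exp (w * Complex.I)) + Complex.abs (Complex.exp (-w * Complex.I))) / 2 := by
        rw [map_div₀]
        simp only [Complex.abs_two]
        gcongr
        exact Complex.abs.add_le _ _
    _ ≤ Real.exp |w.im| := by
        rw [h1, h2]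
        have := Real.exp_le_exp.2 (neg_abs_le w.im)
        have h3 := Real.exp_le_exp.2 (neg_le_abs w.im)
        have h4 := Real.exp_le_exp.2 (le_abs_self w.im)
        nlinarith [Real.exp_pos w.im, Real.exp_pos (-w.im)]

lemma abs_sin_le (w : ℂ) : Complex.abs (Complex.sin w) ≤ Real.exp |w.im| := by
  rw [Complex.sin]
  have h1 : Complex.abs (Complex.exp (w * Complex.I)) = Real.exp (-w.im) := by
    rw [Complex.abs_exp]; congr 1; simp [Complex.mul_I_re]
  have h2 : Complex.abs (Complex.exp (-w * Complex.I)) = Real.exp (w.im) := by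
    rw [Complex.abs_exp]; congr 1; simp [Complex.mul_I_re]
  calc Complex.abs ((Complex.exp (-w * Complex.I) - Complex.exp (w * Complex.I)) * Complex.I / 2)
      ≤ (Complex.abs (Complex.exp (-w * Complex.I)) + Complex.abs (Complex.exp (w * Complex.I))) / 2 := by
        rw [map_div₀, map_mul]
        simp only [Complex.abs_two, Complex.abs_I, mul_one]
        gcongr
        simpa [Complex.norm_eq_abs] using norm_sub_le (Complex.exp (-w*Complex.I)) (Complex.exp (w*Complex.I))
    _ ≤ Real.exp |w.im| := by
        rw [h1, h2]
        have h3 := Real.exp_le_exp.2 (neg_le_abs w.im)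
        have h4 := Real.exp_le_exp.2 (le_abs_self w.im)
        linarith

lemma intV_of_L2 (V : ℝ → ℝ) (hm : Measurable V)
    (h2 : ∀ a b : ℝ, IntervalIntegrable (fun x => V x ^ 2) volume a b) :
    ∀ a b : ℝ, IntervalIntegrable V volume a b := by
  intro a b
  apply IntervalIntegrable.mono_fun (((h2 a b).add (intervalIntegrable_const (c := (1:ℝ)))).div_const 2)
  · exact (hm.aestronglyMeasurable).restrict
  · filter_upwards with x
    simp only [Real.norm_eq_abs]
    rw [abs_of_nonneg (by positivity : (0:ℝ) ≤ (V x ^ 2 + 1)/2)]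
    nlinarith [sq_nonneg (|V x| - 1), sq_abs (V x)]

lemma intVC (V : ℝ → ℝ) (hm : Measurable V)
    (hV : ∀ a b : ℝ, IntervalIntegrable V volume a b) (φ : ℝ → ℂ) (hφ : Continuous φ) :
    ∀ a b : ℝ, IntervalIntegrable (fun t => (V t : ℂ) * φ t) volume a b := by
  intro a b
  have hVc : IntervalIntegrable (fun t => (V t : ℂ)) volume a b := by
    apply IntervalIntegrable.mono_fun (hV a b)
    · exact ((Complex.measurable_ofReal.comp hm).aestronglyMeasurable).restrict
    · filter_upwards with x
      simp
  exact hVc.mul_continuousOn hφ.continuousOn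

lemma intVR (V : ℝ → ℝ) (hm : Measurable V)
    (hV : ∀ a b : ℝ, IntervalIntegrable V volume a b) (φ : ℝ → ℝ) (hφ : Continuous φ) :
    ∀ a b : ℝ, IntervalIntegrable (fun t => |V t| * φ t) volume a b := by
  intro a b
  exact ((hV a b).abs).mul_continuousOn hφ.continuousOn



lemma tri_fub (g h : ℝ → ℂ) (x : ℝ) (hx : 0 ≤ x)
    (hg : IntegrableOn g (Set.Ioc 0 x)) (hh : IntegrableOn h (Set.Ioc 0 x)) :
    ∫ t in (0:ℝ)..x, h t * ∫ σ in (0:ℝ)..t, g σ =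
      ∫ σ in (0:ℝ)..x, (∫ t in σ..x, h t) * g σ := by
  set μ := volume.restrict (Set.Ioc (0:ℝ) x) with hμ
  have hmeasS : MeasurableSet {p : ℝ × ℝ | p.2 ≤ p.1} :=
    measurableSet_le measurable_snd measurable_fst
  have hF : Integrable (Function.uncurry fun t σ => if σ ≤ t then h t * g σ else 0)
      (μ.prod μ) := by
    have : Integrable (fun p : ℝ × ℝ => h p.1 * g p.2) (μ.prod μ) := hh.mul_prod hg
    have h2 := this.indicator hmeasS
    apply h2.congr
    filter_upwards with p
    simp only [Function.uncurry]
    rw [Set.indicator_apply]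
    rfl
  rw [intervalIntegral.integral_of_le hx, intervalIntegral.integral_of_le hx]
  have lhs_eq : ∫ t in Set.Ioc (0:ℝ) x, h t * ∫ σ in (0:ℝ)..t, g σ =
      ∫ t, ∫ σ, (if σ ≤ t then h t * g σ else 0) ∂μ ∂μ := by
    apply setIntegral_congr_fun measurableSet_Ioc
    intro t ht
    have h1 : ∫ σ in (0:ℝ)..t, g σ = ∫ σ in Set.Ioc (0:ℝ) t, g σ :=
      intervalIntegral.integral_of_le ht.1.le
    have h2 : Set.Ioc (0:ℝ) x ∩ Set.Iic t = Set.Ioc 0 t := by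
      ext σ; simp only [Set.mem_inter_iff, Set.mem_Ioc, Set.mem_Iic]
      constructor
      · rintro ⟨⟨h3, _⟩, h5⟩; exact ⟨h3, h5⟩
      · rintro ⟨h3, h4⟩; exact ⟨⟨h3, h4.trans ht.2⟩, h4⟩
    simp only []
    rw [h1, ← h2, ← setIntegral_indicator measurableSet_Iic]
    rw [hμ, ← integral_const_mul]
    congr 1
    ext σ
    rw [Set.indicator_apply]
    simp only [Set.mem_Iic]
    split <;> simp
  rw [lhs_eq, integral_integral_swap hF]
  apply setIntegral_congr_fun measurableSet_Ioc
  intro σ hσ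
  have h1 : ∀ t : ℝ, (if σ ≤ t then h t * g σ else 0) = (Set.Ici σ).indicator h t * g σ := by
    intro t; rw [Set.indicator_apply]; simp only [Set.mem_Ici]; split <;> simp
  simp only [h1]
  rw [hμ, integral_mul_const, setIntegral_indicator measurableSet_Ici]
  have h2 : Set.Ioc (0:ℝ) x ∩ Set.Ici σ = Set.Icc σ x := by
    ext t; simp only [Set.mem_inter_iff, Set.mem_Ioc, Set.mem_Icc, Set.mem_Ici]
    constructor
    · rintro ⟨⟨_, h4⟩, h5⟩; exact ⟨h5, h4⟩
    · rintro ⟨h3, h4⟩; exact ⟨⟨lt_of_lt_of_le hσ.1 h3, h4⟩, h3⟩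
  rw [h2, integral_Icc_eq_integral_Ioc, ← intervalIntegral.integral_of_le hσ.2]



lemma hasDerivAt_csin (ρ : ℂ) (t : ℝ) :
    HasDerivAt (fun t : ℝ => Complex.sin (ρ * t)) (ρ * Complex.cos (ρ * t)) t := by
  have h : HasDerivAt (fun z : ℂ => Complex.sin (ρ * z)) (ρ * Complex.cos (ρ * t)) (t : ℂ) := by
    have := (Complex.hasDerivAt_sin (ρ * t)).comp (t : ℂ) ((hasDerivAt_id (t : ℂ)).const_mul ρ)
    simpa [mul_comm, Function.comp_def] using this
  exact h.comp_ofReal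

lemma hasDerivAt_ccos (ρ : ℂ) (t : ℝ) :
    HasDerivAt (fun t : ℝ => Complex.cos (ρ * t)) (-(ρ * Complex.sin (ρ * t))) t := by
  have h : HasDerivAt (fun z : ℂ => Complex.cos (ρ * z)) (-(ρ * Complex.sin (ρ * t))) (t : ℂ) := by
    have := (Complex.hasDerivAt_cos (ρ * t)).comp (t : ℂ) ((hasDerivAt_id (t : ℂ)).const_mul ρ)
    simpa [mul_comm, Function.comp_def] using this
  exact h.comp_ofReal

lemma hasDerivAt_xt (x : ℝ) (t : ℝ) :
    HasDerivAt (fun t : ℝ => (x : ℂ) - (t : ℂ)) (-1) t := by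
  have h : HasDerivAt (fun z : ℂ => (x : ℂ) - z) (-1) (t : ℂ) := by
    simpa using (hasDerivAt_id ((t : ℝ) : ℂ)).const_sub (x : ℂ)
  exact h.comp_ofReal

lemma cont_csin (ρ : ℂ) : Continuous (fun t : ℝ => Complex.sin (ρ * t)) := by
  fun_prop

lemma cont_ccos (ρ : ℂ) : Continuous (fun t : ℝ => Complex.cos (ρ * t)) := by
  fun_prop

lemma int_ccos (ρ : ℂ) (hρ : ρ ≠ 0) (a b : ℝ) :
    ∫ t in a..b, Complex.cos (ρ * t) = (Complex.sin (ρ * b) - Complex.sin (ρ * a)) / ρ := by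
  have key : ∀ t ∈ Set.uIcc a b, HasDerivAt (fun t : ℝ => Complex.sin (ρ * t) / ρ)
      (Complex.cos (ρ * t)) t := by
    intro t _
    have := (hasDerivAt_csin ρ t).div_const ρ
    simpa [mul_div_assoc, mul_div_cancel_left₀ _ hρ] using this
  rw [intervalIntegral.integral_eq_sub_of_hasDerivAt key ((cont_ccos ρ).intervalIntegrable a b)]
  ring

lemma int_csin (ρ : ℂ) (hρ : ρ ≠ 0) (a b : ℝ) :
    ∫ t in a..b, Complex.sin (ρ * t) = (Complex.cos (ρ * a) - Complex.cos (ρ * b)) / ρ := by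
  have key : ∀ t ∈ Set.uIcc a b, HasDerivAt (fun t : ℝ => -Complex.cos (ρ * t) / ρ)
      (Complex.sin (ρ * t)) t := by
    intro t _
    have := ((hasDerivAt_ccos ρ t).neg).div_const ρ
    have h2 : -(-(ρ * Complex.sin (ρ * t))) / ρ = Complex.sin (ρ * t) := by
      field_simp
    rwa [h2] at this
  rw [intervalIntegral.integral_eq_sub_of_hasDerivAt key ((cont_csin ρ).intervalIntegrable a b)]
  ring

lemma int_xt_ccos (ρ : ℂ) (hρ : ρ ≠ 0) (x a b : ℝ) :
    ∫ t in a..b, ((x : ℂ) - t) * Complex.cos (ρ * t) =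
      ((((x : ℂ) - b) * Complex.sin (ρ * b) - ((x : ℂ) - a) * Complex.sin (ρ * a)) / ρ
        - (Complex.cos (ρ * b) - Complex.cos (ρ * a)) / ρ ^ 2) := by
  have key : ∀ t ∈ Set.uIcc a b, HasDerivAt
      (fun t : ℝ => ((x : ℂ) - t) * Complex.sin (ρ * t) / ρ - Complex.cos (ρ * t) / ρ ^ 2)
      (((x : ℂ) - t) * Complex.cos (ρ * t)) t := by
    intro t _
    have h1 := ((hasDerivAt_xt x t).mul (hasDerivAt_csin ρ t)).div_const ρ
    have h2 := (hasDerivAt_ccos ρ t).div_const (ρ ^ 2)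
    have h3 := h1.sub h2
    convert h3 using 1
    · rfl
    · rfl
    field_simp
    ring
  have hcont : Continuous (fun t : ℝ => ((x : ℂ) - t) * Complex.cos (ρ * t)) := by
    fun_prop
  rw [intervalIntegral.integral_eq_sub_of_hasDerivAt key (hcont.intervalIntegrable a b)]
  ring

lemma int_xt_csin (ρ : ℂ) (hρ : ρ ≠ 0) (x a b : ℝ) :
    ∫ t in a..b, ((x : ℂ) - t) * Complex.sin (ρ * t) =
      (-((((x : ℂ) - b) * Complex.cos (ρ * b) - ((x : ℂ) - a) * Complex.cos (ρ * a))) / ρ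
        - (Complex.sin (ρ * b) - Complex.sin (ρ * a)) / ρ ^ 2) := by
  have key : ∀ t ∈ Set.uIcc a b, HasDerivAt
      (fun t : ℝ => -(((x : ℂ) - t) * Complex.cos (ρ * t)) / ρ - Complex.sin (ρ * t) / ρ ^ 2)
      (((x : ℂ) - t) * Complex.sin (ρ * t)) t := by
    intro t _
    have h1 := (((hasDerivAt_xt x t).mul (hasDerivAt_ccos ρ t)).neg).div_const ρ
    have h2 := (hasDerivAt_csin ρ t).div_const (ρ ^ 2)
    have h3 := h1.sub h2
    convert h3 using 1
    · rfl
    · rfl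
    field_simp
    ring
  have hcont : Continuous (fun t : ℝ => ((x : ℂ) - t) * Complex.sin (ρ * t)) := by
    fun_prop
  rw [intervalIntegral.integral_eq_sub_of_hasDerivAt key (hcont.intervalIntegrable a b)]
  ring



lemma zero_of_volterra (R : ℝ → ℂ) (hR : Continuous R) (K : ℝ) (hK : 0 ≤ K)
    (h : ∀ x ∈ Set.Icc (0:ℝ) 1, Complex.abs (R x) ≤ K * ∫ t in (0:ℝ)..x, Complex.abs (R t)) :
    ∀ x ∈ Set.Icc (0:ℝ) 1, R x = 0 := by
  have hRn : Continuous fun t => Complex.abs (R t) := Complex.continuous_abs.comp hR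
  have hint : ∀ a b : ℝ, IntervalIntegrable (fun t => Complex.abs (R t)) volume a b :=
    hRn.intervalIntegrable
  set f : ℝ → ℝ := fun x => ∫ t in (0:ℝ)..x, Complex.abs (R t) with hf
  have hfc : Continuous f := intervalIntegral.continuous_primitive hint 0
  have hfd : ∀ x : ℝ, HasDerivAt f (Complex.abs (R x)) x := by
    intro x
    exact intervalIntegral.integral_hasDerivAt_right (hint 0 x)
      (hRn.stronglyMeasurableAtFilter _ _) (hRn.continuousAt)
  have hfnonneg : ∀ x ∈ Set.Icc (0:ℝ) 1, 0 ≤ f x := by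
    intro x hx
    exact intervalIntegral.integral_nonneg hx.1 (fun u _ => Complex.abs.nonneg _)
  have hg : ∀ x ∈ Set.Icc (0:ℝ) 1, ‖f x‖ ≤ gronwallBound 0 K 0 (x - 0) := by
    apply norm_le_gronwallBound_of_norm_deriv_right_le (f' := fun x => Complex.abs (R x))
      hfc.continuousOn (fun x _ => (hfd x).hasDerivWithinAt)
    · simp [hf]
    · intro x hx
      have h1 := h x ⟨hx.1, hx.2.le⟩
      rw [Real.norm_eq_abs, abs_of_nonneg (Complex.abs.nonneg _),
        Real.norm_eq_abs, abs_of_nonneg (hfnonneg x ⟨hx.1, hx.2.le⟩)]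
      simpa using h1
  intro x hx
  have h2 := hg x hx
  rw [gronwallBound_ε0] at h2
  simp only [zero_mul] at h2
  have h3 : f x = 0 := le_antisymm (by simpa [Real.norm_eq_abs, abs_of_nonneg (hfnonneg x hx)] using h2) (hfnonneg x hx)
  have h4 := h x hx
  have h5 : (∫ t in (0:ℝ)..x, Complex.abs (R t)) = f x := rfl
  rw [h5, h3, mul_zero] at h4
  have := le_antisymm h4 (Complex.abs.nonneg _)
  simpa [Complex.abs.eq_zero] using this

lemma intVC' (V : ℝ → ℝ) (hm : Measurable V)
    (hV : ∀ a b : ℝ, IntervalIntegrable V volume a b) (φ ψ : ℝ → ℂ) (hφ : Continuous φ)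
    (hsame : ∀ t, ψ t = (V t : ℂ) * φ t) :
    ∀ a b : ℝ, IntervalIntegrable ψ volume a b := by
  rw [show ψ = fun t => (V t : ℂ) * φ t from funext hsame]
  exact intVC V hm hV φ hφ

def g1 (V : ℝ → ℝ) (ρ : ℂ) (u : ℝ → ℂ) : ℝ → ℂ :=
  fun σ => (V σ : ℂ) * (Complex.cos (ρ * σ) * u σ)

def g2 (V : ℝ → ℝ) (ρ : ℂ) (u : ℝ → ℂ) : ℝ → ℂ :=
  fun σ => (V σ : ℂ) * (Complex.sin (ρ * σ) * u σ)

def FF (V : ℝ → ℝ) (ρ : ℂ) (u : ℝ → ℂ) (x : ℝ) : ℂ := ∫ σ in (0:ℝ)..x, g1 V ρ u σ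

def GG (V : ℝ → ℝ) (ρ : ℂ) (u : ℝ → ℂ) (x : ℝ) : ℂ := ∫ σ in (0:ℝ)..x, g2 V ρ u σ

def WW (V : ℝ → ℝ) (ρ : ℂ) (u : ℝ → ℂ) (x : ℝ) : ℂ :=
  (Complex.sin (ρ * x) * FF V ρ u x - Complex.cos (ρ * x) * GG V ρ u x) / ρ

set_option maxHeartbeats 2000000 in
lemma volterra_trig (V : ℝ → ℝ) (ρ : ℂ) (hρ : ρ ≠ 0)
    (hVm : Measurable V) (hVi : ∀ a b : ℝ, IntervalIntegrable V volume a b)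
    (u u' : ℝ → ℂ) (hu : ∀ x, HasDerivAt u (u' x) x)
    (hui : ∀ x, u' x = u' 0 + ∫ t in (0:ℝ)..x, ((V t : ℂ) - ρ ^ 2) * u t) :
    ∀ x ∈ Set.Icc (0:ℝ) 1,
      u x = u 0 * Complex.cos (ρ * x) + u' 0 * Complex.sin (ρ * x) / ρ + WW V ρ u x := by
  have hucont : Continuous u := by
    rw [continuous_iff_continuousAt]; exact fun x => (hu x).continuousAt
  set g : ℝ → ℂ := fun t => ((V t : ℂ) - ρ ^ 2) * u t with hgdef
  have hgint : ∀ a b : ℝ, IntervalIntegrable g volume a b := by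
    intro a b
    have e : g = fun t => (V t : ℂ) * u t - ρ ^ 2 * u t := by
      rw [hgdef]; funext t; ring
    rw [e]
    exact (intVC V hVm hVi u hucont a b).sub
      ((continuous_const.mul hucont).intervalIntegrable a b)
  have hu'cont : Continuous u' := by
    have e : u' = fun x => u' 0 + ∫ t in (0:ℝ)..x, g t := funext hui
    rw [e]
    exact continuous_const.add (intervalIntegral.continuous_primitive hgint 0)
  have hg1cont : Continuous (fun σ : ℝ => Complex.cos (ρ * σ) * u σ) :=
    (cont_ccos ρ).mul hucont
  have hg2cont : Continuous (fun σ : ℝ => Complex.sin (ρ * σ) * u σ) :=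
    (cont_csin ρ).mul hucont
  have hg1int : ∀ a b : ℝ, IntervalIntegrable (g1 V ρ u) volume a b :=
    intVC V hVm hVi _ hg1cont
  have hg2int : ∀ a b : ℝ, IntervalIntegrable (g2 V ρ u) volume a b :=
    intVC V hVm hVi _ hg2cont
  have hFcont : Continuous (FF V ρ u) := intervalIntegral.continuous_primitive hg1int 0
  have hGcont : Continuous (GG V ρ u) := intervalIntegral.continuous_primitive hg2int 0
  have hWcont : Continuous (WW V ρ u) :=
    (((cont_csin ρ).mul hFcont).sub ((cont_ccos ρ).mul hGcont)).div_const ρ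
  -- Step C : second-kind Volterra with kernel (x - t)
  have hC : ∀ x : ℝ, 0 ≤ x →
      u x = u 0 + u' 0 * x + ∫ t in (0:ℝ)..x, ((x : ℂ) - t) * g t := by
    intro x hx
    have h1 : ∫ t in (0:ℝ)..x, u' t = u x - u 0 :=
      intervalIntegral.integral_eq_sub_of_hasDerivAt (fun t _ => hu t)
        (hu'cont.intervalIntegrable 0 x)
    have h2 : ∫ t in (0:ℝ)..x, u' t
        = ∫ t in (0:ℝ)..x, (u' 0 + ∫ σ in (0:ℝ)..t, g σ) :=
      intervalIntegral.integral_congr fun t _ => hui t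
    have hprim : Continuous (fun t => ∫ σ in (0:ℝ)..t, g σ) :=
      intervalIntegral.continuous_primitive hgint 0
    have h3 : ∫ t in (0:ℝ)..x, (u' 0 + ∫ σ in (0:ℝ)..t, g σ)
        = u' 0 * x + ∫ t in (0:ℝ)..x, ∫ σ in (0:ℝ)..t, g σ := by
      rw [intervalIntegral.integral_add (intervalIntegrable_const) (hprim.intervalIntegrable 0 x)]
      congr 1
      rw [intervalIntegral.integral_const]
      simp [mul_comm, Complex.real_smul]
    have h4 : ∫ t in (0:ℝ)..x, ∫ σ in (0:ℝ)..t, g σ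
        = ∫ t in (0:ℝ)..x, ((x : ℂ) - t) * g t := by
      have e1 : ∫ t in (0:ℝ)..x, ∫ σ in (0:ℝ)..t, g σ
          = ∫ t in (0:ℝ)..x, (1 : ℂ) * ∫ σ in (0:ℝ)..t, g σ := by simp
      rw [e1, tri_fub g (fun _ => (1:ℂ)) x hx ((hgint 0 x).1)
        ((intervalIntegrable_const (c := (1:ℂ))).1)]
      apply intervalIntegral.integral_congr
      intro σ _
      show (∫ t in σ..x, (1:ℂ)) * g σ = ((x : ℂ) - σ) * g σ
      rw [intervalIntegral.integral_const]
      norm_num [Complex.real_smul]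
    rw [h2, h3, h4] at h1
    linear_combination -h1
  -- the remainder R
  set R : ℝ → ℂ := fun y => u y - u 0 * Complex.cos (ρ * y) - u' 0 * Complex.sin (ρ * y) / ρ
      - WW V ρ u y with hRdef
  have hRcont : Continuous R := by
    apply Continuous.sub (Continuous.sub (Continuous.sub hucont
      (continuous_const.mul (cont_ccos ρ)))
      ((continuous_const.mul (cont_csin ρ)).div_const ρ)) hWcont
  -- key Volterra identity for R
  have key : ∀ x : ℝ, 0 ≤ x → R x = -ρ ^ 2 * ∫ t in (0:ℝ)..x, ((x : ℂ) - t) * R t := by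
    intro x hx
    have hh1cont : Continuous (fun t : ℝ => ((x : ℂ) - t) * Complex.sin (ρ * t)) := by
      fun_prop
    have hh2cont : Continuous (fun t : ℝ => ((x : ℂ) - t) * Complex.cos (ρ * t)) := by
      fun_prop
    -- ∫ (x-t) W t
    have hW : ∫ t in (0:ℝ)..x, ((x : ℂ) - t) * WW V ρ u t
        = (1/ρ^2) * (∫ t in (0:ℝ)..x, ((x : ℂ) - t) * ((V t : ℂ) * u t))
          - (1/ρ^2) * WW V ρ u x := by
      have e2 : (fun t : ℝ => ((x : ℂ) - t) * WW V ρ u t)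
          = fun t : ℝ => (1/ρ) * ((((x : ℂ) - t) * Complex.sin (ρ * t)) * FF V ρ u t)
            - (1/ρ) * ((((x : ℂ) - t) * Complex.cos (ρ * t)) * GG V ρ u t) := by
        funext t
        simp only [WW]
        field_simp
      rw [e2, intervalIntegral.integral_sub
        ((((hh1cont.fun_mul hFcont).intervalIntegrable 0 x).const_mul _))
        ((((hh2cont.fun_mul hGcont).intervalIntegrable 0 x).const_mul _)),
        intervalIntegral.integral_const_mul, intervalIntegral.integral_const_mul]
      rw [show (FF V ρ u : ℝ → ℂ) = fun t => ∫ σ in (0:ℝ)..t, g1 V ρ u σ from rfl,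
          show (GG V ρ u : ℝ → ℂ) = fun t => ∫ σ in (0:ℝ)..t, g2 V ρ u σ from rfl]
      rw [tri_fub (g1 V ρ u) _ x hx ((hg1int 0 x).1) ((hh1cont.intervalIntegrable 0 x).1),
          tri_fub (g2 V ρ u) _ x hx ((hg2int 0 x).1) ((hh2cont.intervalIntegrable 0 x).1)]
      have e3 : ∫ σ in (0:ℝ)..x, (∫ t in σ..x, ((x : ℂ) - t) * Complex.sin (ρ * t)) * g1 V ρ u σ
          = ∫ σ in (0:ℝ)..x,
            ((-((((x : ℂ) - x) * Complex.cos (ρ * x) - ((x : ℂ) - σ) * Complex.cos (ρ * σ))) / ρ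
              - (Complex.sin (ρ * x) - Complex.sin (ρ * σ)) / ρ ^ 2)) * g1 V ρ u σ := by
        apply intervalIntegral.integral_congr
        intro σ _
        show (∫ t in σ..x, ((x : ℂ) - t) * Complex.sin (ρ * t)) * g1 V ρ u σ = _
        rw [int_xt_csin ρ hρ x σ x]
      have e4 : ∫ σ in (0:ℝ)..x, (∫ t in σ..x, ((x : ℂ) - t) * Complex.cos (ρ * t)) * g2 V ρ u σ
          = ∫ σ in (0:ℝ)..x,
            ((((((x : ℂ) - x) * Complex.sin (ρ * x) - ((x : ℂ) - σ) * Complex.sin (ρ * σ)) / ρ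
              - (Complex.cos (ρ * x) - Complex.cos (ρ * σ)) / ρ ^ 2))) * g2 V ρ u σ := by
        apply intervalIntegral.integral_congr
        intro σ _
        show (∫ t in σ..x, ((x : ℂ) - t) * Complex.cos (ρ * t)) * g2 V ρ u σ = _
        rw [int_xt_ccos ρ hρ x σ x]
      rw [e3, e4]
      -- pointwise combination
      have hK1int : IntervalIntegrable (fun σ : ℝ =>
          ((-((((x : ℂ) - x) * Complex.cos (ρ * x) - ((x : ℂ) - σ) * Complex.cos (ρ * σ))) / ρ
            - (Complex.sin (ρ * x) - Complex.sin (ρ * σ)) / ρ ^ 2)) * g1 V ρ u σ) volume 0 x := by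
        apply intVC' V hVm hVi (fun σ : ℝ =>
          ((-((((x : ℂ) - x) * Complex.cos (ρ * x) - ((x : ℂ) - σ) * Complex.cos (ρ * σ))) / ρ
            - (Complex.sin (ρ * x) - Complex.sin (ρ * σ)) / ρ ^ 2)) * (Complex.cos (ρ * σ) * u σ))
        · fun_prop
        · intro t; simp only [g1]; ring
      have hK2int : IntervalIntegrable (fun σ : ℝ =>
          ((((((x : ℂ) - x) * Complex.sin (ρ * x) - ((x : ℂ) - σ) * Complex.sin (ρ * σ)) / ρ
            - (Complex.cos (ρ * x) - Complex.cos (ρ * σ)) / ρ ^ 2))) * g2 V ρ u σ) volume 0 x := by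
        apply intVC' V hVm hVi (fun σ : ℝ =>
          ((((((x : ℂ) - x) * Complex.sin (ρ * x) - ((x : ℂ) - σ) * Complex.sin (ρ * σ)) / ρ
            - (Complex.cos (ρ * x) - Complex.cos (ρ * σ)) / ρ ^ 2))) * (Complex.sin (ρ * σ) * u σ))
        · fun_prop
        · intro t; simp only [g2]; ring
      rw [← intervalIntegral.integral_const_mul, ← intervalIntegral.integral_const_mul,
        ← intervalIntegral.integral_sub (hK1int.const_mul _) (hK2int.const_mul _)]
      have e5 : ∀ σ : ℝ,
          (1/ρ) * (((-((((x : ℂ) - x) * Complex.cos (ρ * x) - ((x : ℂ) - σ) * Complex.cos (ρ * σ))) / ρ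
            - (Complex.sin (ρ * x) - Complex.sin (ρ * σ)) / ρ ^ 2)) * g1 V ρ u σ)
          - (1/ρ) * (((((((x : ℂ) - x) * Complex.sin (ρ * x) - ((x : ℂ) - σ) * Complex.sin (ρ * σ)) / ρ
            - (Complex.cos (ρ * x) - Complex.cos (ρ * σ)) / ρ ^ 2))) * g2 V ρ u σ)
          = (1/ρ^2) * (((x : ℂ) - σ) * ((V σ : ℂ) * u σ))
            - ((1/ρ^2) * (Complex.sin (ρ * x) / ρ * g1 V ρ u σ)
              - (1/ρ^2) * (Complex.cos (ρ * x) / ρ * g2 V ρ u σ)) := by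
        intro σ
        have pyth := Complex.sin_sq_add_cos_sq (ρ * σ)
        simp only [g1, g2]
        field_simp
        linear_combination ((x : ℂ) - σ) * (V σ : ℂ) * u σ * ρ * pyth
      rw [intervalIntegral.integral_congr (fun σ _ => e5 σ)]
      have hPint : IntervalIntegrable (fun σ : ℝ => ((x : ℂ) - σ) * ((V σ : ℂ) * u σ)) volume 0 x := by
        apply intVC' V hVm hVi (fun σ : ℝ => ((x : ℂ) - σ) * u σ)
        · fun_prop
        · intro t; ring
      rw [intervalIntegral.integral_sub (hPint.const_mul _)
        (((((hg1int 0 x).const_mul _).const_mul _).sub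
          (((hg2int 0 x).const_mul _).const_mul _))),
        intervalIntegral.integral_const_mul,
        intervalIntegral.integral_sub (((hg1int 0 x).const_mul _).const_mul _)
          (((hg2int 0 x).const_mul _).const_mul _),
        intervalIntegral.integral_const_mul, intervalIntegral.integral_const_mul,
        intervalIntegral.integral_const_mul, intervalIntegral.integral_const_mul]
      simp only [WW, FF, GG]
      generalize (∫ t in (0:ℝ)..x, ((x:ℂ) - t) * ((V t:ℂ) * u t)) = P
      generalize (∫ σ in (0:ℝ)..x, g1 V ρ u σ) = Fx
      generalize (∫ σ in (0:ℝ)..x, g2 V ρ u σ) = Gx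
      field_simp
    -- split ∫ (x-t) R t
    have e6 : (fun t : ℝ => ((x : ℂ) - t) * R t)
        = fun t : ℝ => ((x : ℂ) - t) * u t
          - (u 0 * (((x : ℂ) - t) * Complex.cos (ρ * t))
            + (u' 0 / ρ) * (((x : ℂ) - t) * Complex.sin (ρ * t))
            + ((x : ℂ) - t) * WW V ρ u t) := by
      funext t
      simp only [hRdef]
      ring
    have hsplit : ∫ t in (0:ℝ)..x, ((x : ℂ) - t) * R t
        = (∫ t in (0:ℝ)..x, ((x : ℂ) - t) * u t)
          - (u 0 * (∫ t in (0:ℝ)..x, ((x : ℂ) - t) * Complex.cos (ρ * t))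
            + (u' 0 / ρ) * (∫ t in (0:ℝ)..x, ((x : ℂ) - t) * Complex.sin (ρ * t))
            + ∫ t in (0:ℝ)..x, ((x : ℂ) - t) * WW V ρ u t) := by
      rw [e6, intervalIntegral.integral_sub]
      · congr 1
        rw [intervalIntegral.integral_add, intervalIntegral.integral_add,
          intervalIntegral.integral_const_mul, intervalIntegral.integral_const_mul]
        · exact (hh2cont.intervalIntegrable 0 x).const_mul _
        · exact (hh1cont.intervalIntegrable 0 x).const_mul _
        · exact ((hh2cont.intervalIntegrable 0 x).const_mul _).add
            ((hh1cont.intervalIntegrable 0 x).const_mul _)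
        · exact ((continuous_const.sub Complex.continuous_ofReal).mul hWcont).intervalIntegrable 0 x
      · exact ((continuous_const.sub Complex.continuous_ofReal).mul hucont).intervalIntegrable 0 x
      · exact (((hh2cont.intervalIntegrable 0 x).const_mul _).add
            ((hh1cont.intervalIntegrable 0 x).const_mul _)).add
          (((continuous_const.sub Complex.continuous_ofReal).mul hWcont).intervalIntegrable 0 x)
    -- decompose ∫ (x-t) g t
    have hgdecomp : ∫ t in (0:ℝ)..x, ((x : ℂ) - t) * g t
        = (∫ t in (0:ℝ)..x, ((x : ℂ) - t) * ((V t : ℂ) * u t))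
          - ρ ^ 2 * ∫ t in (0:ℝ)..x, ((x : ℂ) - t) * u t := by
      have e7 : (fun t : ℝ => ((x : ℂ) - t) * g t)
          = fun t : ℝ => ((x : ℂ) - t) * ((V t : ℂ) * u t)
            - ρ ^ 2 * (((x : ℂ) - t) * u t) := by
        funext t
        simp only [hgdef]
        ring
      have hPint : IntervalIntegrable (fun σ : ℝ => ((x : ℂ) - σ) * ((V σ : ℂ) * u σ)) volume 0 x := by
        apply intVC' V hVm hVi (fun σ : ℝ => ((x : ℂ) - σ) * u σ)
        · fun_prop
        · intro t; ring
      rw [e7, intervalIntegral.integral_sub hPint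
        ((((continuous_const.fun_sub Complex.continuous_ofReal).fun_mul hucont).intervalIntegrable 0 x).const_mul _),
        intervalIntegral.integral_const_mul]
    have hCx := hC x hx
    rw [hgdecomp] at hCx
    rw [hsplit, hW, int_xt_ccos ρ hρ x 0 x, int_xt_csin ρ hρ x 0 x]
    have hRx : R x = u x - u 0 * Complex.cos (ρ * x) - u' 0 * Complex.sin (ρ * x) / ρ
        - (Complex.sin (ρ * x) * FF V ρ u x - Complex.cos (ρ * x) * GG V ρ u x) / ρ := rfl
    rw [hRx, hCx]
    simp only [Complex.ofReal_zero, mul_zero, Complex.sin_zero, Complex.cos_zero,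
      sub_zero, zero_mul, zero_div, WW]
    generalize (∫ t in (0:ℝ)..x, ((x:ℂ) - t) * ((V t:ℂ) * u t)) = P
    generalize (∫ t in (0:ℝ)..x, ((x:ℂ) - t) * u t) = U
    generalize FF V ρ u x = Fx
    generalize GG V ρ u x = Gx
    generalize Complex.sin (ρ * x) = S
    generalize Complex.cos (ρ * x) = C
    field_simp
    ring
  -- Gronwall: R vanishes on [0,1]
  have hzero : ∀ x ∈ Set.Icc (0:ℝ) 1, R x = 0 := by
    apply zero_of_volterra R hRcont (Complex.abs ρ ^ 2) (by positivity)
    intro x hx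
    rw [key x hx.1]
    rw [map_mul, map_neg_eq_map, map_pow]
    have hb1 : Complex.abs (∫ t in (0:ℝ)..x, ((x : ℂ) - t) * R t)
        ≤ ∫ t in (0:ℝ)..x, Complex.abs (((x : ℂ) - t) * R t) := by
      simpa [Complex.norm_eq_abs] using
        intervalIntegral.norm_integral_le_integral_norm (f := fun t => ((x : ℂ) - t) * R t) hx.1
    have hb2 : ∫ t in (0:ℝ)..x, Complex.abs (((x : ℂ) - t) * R t)
        ≤ ∫ t in (0:ℝ)..x, Complex.abs (R t) := by
      apply intervalIntegral.integral_mono_on hx.1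
      · exact ((Complex.continuous_abs.comp
          (((continuous_const.sub Complex.continuous_ofReal).mul hRcont))).intervalIntegrable 0 x)
      · exact ((Complex.continuous_abs.comp hRcont).intervalIntegrable 0 x)
      · intro t ht
        rw [map_mul]
        have h8 : Complex.abs ((x : ℂ) - t) ≤ 1 := by
          rw [show ((x : ℂ) - t) = ((x - t : ℝ) : ℂ) by push_cast; ring, Complex.abs_ofReal]
          rw [abs_of_nonneg (by linarith [ht.2])]
          linarith [ht.1, hx.2]
        calc Complex.abs ((x : ℂ) - t) * Complex.abs (R t)
            ≤ 1 * Complex.abs (R t) :=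
              mul_le_mul_of_nonneg_right h8 (Complex.abs.nonneg _)
          _ = Complex.abs (R t) := one_mul _
    calc Complex.abs ρ ^ 2 * Complex.abs (∫ t in (0:ℝ)..x, ((x : ℂ) - t) * R t)
        ≤ Complex.abs ρ ^ 2 * ∫ t in (0:ℝ)..x, Complex.abs (((x : ℂ) - t) * R t) := by
          exact mul_le_mul_of_nonneg_left hb1 (by positivity)
      _ ≤ Complex.abs ρ ^ 2 * ∫ t in (0:ℝ)..x, Complex.abs (R t) :=
          mul_le_mul_of_nonneg_left hb2 (by positivity)
  intro x hx
  have h9 := hzero x hx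
  simp only [hRdef] at h9
  linear_combination h9

lemma intVR' (V : ℝ → ℝ) (hm : Measurable V)
    (hV : ∀ a b : ℝ, IntervalIntegrable V volume a b) (φ ψ : ℝ → ℝ) (hφ : Continuous φ)
    (hsame : ∀ t, ψ t = |V t| * φ t) :
    ∀ a b : ℝ, IntervalIntegrable ψ volume a b := by
  rw [show ψ = fun t => |V t| * φ t from funext hsame]
  exact fun a b => ((hV a b).abs).mul_continuousOn hφ.continuousOn

lemma cont_WW (V : ℝ → ℝ) (ρ : ℂ) (hVm : Measurable V)
    (hVi : ∀ a b : ℝ, IntervalIntegrable V volume a b) (u : ℝ → ℂ) (hucont : Continuous u) :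
    Continuous (WW V ρ u) := by
  have hg1int : ∀ a b : ℝ, IntervalIntegrable (g1 V ρ u) volume a b :=
    intVC V hVm hVi _ ((cont_ccos ρ).mul hucont)
  have hg2int : ∀ a b : ℝ, IntervalIntegrable (g2 V ρ u) volume a b :=
    intVC V hVm hVi _ ((cont_csin ρ).mul hucont)
  exact (((cont_csin ρ).mul (intervalIntegral.continuous_primitive hg1int 0)).sub
    ((cont_ccos ρ).mul (intervalIntegral.continuous_primitive hg2int 0))).div_const ρ

/-- pointwise bound for `WW`. -/
lemma WW_bound (V : ℝ → ℝ) (ρ : ℂ) (hρ : ρ ≠ 0) (hVm : Measurable V)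
    (hVi : ∀ a b : ℝ, IntervalIntegrable V volume a b) (u : ℝ → ℂ) (hucont : Continuous u)
    (x : ℝ) (hx : x ∈ Set.Icc (0:ℝ) 1) :
    Complex.abs (WW V ρ u x) ≤ (1 / Complex.abs ρ) *
      ∫ σ in (0:ℝ)..x, Real.exp (|ρ.im| * (x - σ)) * (|V σ| * Complex.abs (u σ)) := by
  have hg1int : ∀ a b : ℝ, IntervalIntegrable (g1 V ρ u) volume a b :=
    intVC V hVm hVi _ ((cont_ccos ρ).mul hucont)
  have hg2int : ∀ a b : ℝ, IntervalIntegrable (g2 V ρ u) volume a b :=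
    intVC V hVm hVi _ ((cont_csin ρ).mul hucont)
  have hcomb : Complex.sin (ρ * x) * FF V ρ u x - Complex.cos (ρ * x) * GG V ρ u x
      = ∫ σ in (0:ℝ)..x, (Complex.sin (ρ * x) * g1 V ρ u σ - Complex.cos (ρ * x) * g2 V ρ u σ) := by
    rw [intervalIntegral.integral_sub ((hg1int 0 x).const_mul _) ((hg2int 0 x).const_mul _),
      intervalIntegral.integral_const_mul, intervalIntegral.integral_const_mul]
    rfl
  rw [WW, map_div₀, hcomb]
  have haρ : 0 < Complex.abs ρ := Complex.abs.pos hρ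
  rw [div_le_iff₀ haρ]
  have h1 : Complex.abs (∫ σ in (0:ℝ)..x,
      (Complex.sin (ρ * x) * g1 V ρ u σ - Complex.cos (ρ * x) * g2 V ρ u σ))
      ≤ ∫ σ in (0:ℝ)..x, Complex.abs
      (Complex.sin (ρ * x) * g1 V ρ u σ - Complex.cos (ρ * x) * g2 V ρ u σ) := by
    simpa [Complex.norm_eq_abs] using intervalIntegral.norm_integral_le_integral_norm
      (f := fun σ => Complex.sin (ρ * x) * g1 V ρ u σ - Complex.cos (ρ * x) * g2 V ρ u σ) hx.1
  have h2 : ∫ σ in (0:ℝ)..x, Complex.abs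
      (Complex.sin (ρ * x) * g1 V ρ u σ - Complex.cos (ρ * x) * g2 V ρ u σ)
      ≤ ∫ σ in (0:ℝ)..x, Real.exp (|ρ.im| * (x - σ)) * (|V σ| * Complex.abs (u σ)) := by
    apply intervalIntegral.integral_mono_on hx.1
    · have hint := intVC' V hVm hVi
        (fun σ : ℝ => (Complex.sin (ρ * x) * Complex.cos (ρ * σ)
          - Complex.cos (ρ * x) * Complex.sin (ρ * σ)) * u σ)
        (fun σ : ℝ => Complex.sin (ρ * x) * g1 V ρ u σ - Complex.cos (ρ * x) * g2 V ρ u σ)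
        (by fun_prop) (fun t => by simp only [g1, g2]; ring) 0 x
      simpa [Complex.norm_eq_abs] using hint.norm
    · apply intVR' V hVm hVi (fun σ : ℝ => Real.exp (|ρ.im| * (x - σ)) * Complex.abs (u σ))
      · exact (Real.continuous_exp.comp (by fun_prop)).mul (Complex.continuous_abs.comp hucont)
      · intro t; ring
    · intro σ hσ
      have e1 : Complex.sin (ρ * x) * g1 V ρ u σ - Complex.cos (ρ * x) * g2 V ρ u σ
          = (V σ : ℂ) * (Complex.sin (ρ * x - ρ * σ) * u σ) := by
        simp only [g1, g2, Complex.sin_sub]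
        ring
      rw [e1, map_mul, map_mul, Complex.abs_ofReal]
      have e2 : Complex.abs (Complex.sin (ρ * x - ρ * σ)) ≤ Real.exp (|ρ.im| * (x - σ)) := by
        have h3 := abs_sin_le (ρ * x - ρ * σ)
        have e3 : (ρ * (x:ℂ) - ρ * (σ:ℂ)).im = ρ.im * (x - σ) := by
          simp [Complex.sub_im, Complex.mul_im]
          ring
        rw [e3] at h3
        calc Complex.abs (Complex.sin (ρ * x - ρ * σ)) ≤ Real.exp |ρ.im * (x - σ)| := h3
          _ ≤ Real.exp (|ρ.im| * (x - σ)) := by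
            rw [abs_mul]
            apply Real.exp_le_exp.2
            rw [abs_of_nonneg (by linarith [hσ.2] : (0:ℝ) ≤ x - σ)]
        
      calc |V σ| * (Complex.abs (Complex.sin (ρ * x - ρ * σ)) * Complex.abs (u σ))
          ≤ |V σ| * (Real.exp (|ρ.im| * (x - σ)) * Complex.abs (u σ)) := by
            apply mul_le_mul_of_nonneg_left _ (abs_nonneg _)
            exact mul_le_mul_of_nonneg_right e2 (Complex.abs.nonneg _)
        _ = Real.exp (|ρ.im| * (x - σ)) * (|V σ| * Complex.abs (u σ)) := by ring
  calc Complex.abs (∫ σ in (0:ℝ)..x, (Complex.sin (ρ * x) * g1 V ρ u σ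
        - Complex.cos (ρ * x) * g2 V ρ u σ))
      ≤ ∫ σ in (0:ℝ)..x, Real.exp (|ρ.im| * (x - σ)) * (|V σ| * Complex.abs (u σ)) :=
        le_trans h1 h2
    _ ≤ (1 / Complex.abs ρ) * (∫ σ in (0:ℝ)..x, Real.exp (|ρ.im| * (x - σ))
        * (|V σ| * Complex.abs (u σ))) * Complex.abs ρ := by
        rw [div_mul_eq_mul_div, one_mul, div_mul_cancel₀ _ (ne_of_gt haρ)]






/-- a priori bound via maximum principle -/
lemma apriori (V : ℝ → ℝ) (ρ : ℂ) (hVm : Measurable V)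
    (hVi : ∀ a b : ℝ, IntervalIntegrable V volume a b)
    (u : ℝ → ℂ) (hucont : Continuous u) (β : ℝ)
    (A : ℝ) (hA : ∀ x ∈ Set.Icc (0:ℝ) 1, (∫ t in (0:ℝ)..x, |V t|) ≤ A)
    (hhalf : A / Complex.abs ρ ≤ 1/2) (haρ : 0 < Complex.abs ρ) (hAnn : 0 ≤ A)
    (hvol : ∀ x ∈ Set.Icc (0:ℝ) 1, Complex.abs (u x) ≤ β * Real.exp (|ρ.im| * x)
      + (1 / Complex.abs ρ) *
        ∫ σ in (0:ℝ)..x, Real.exp (|ρ.im| * (x - σ)) * (|V σ| * Complex.abs (u σ))) :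
    ∀ x ∈ Set.Icc (0:ℝ) 1, Complex.abs (u x) ≤ 2 * β * Real.exp (|ρ.im| * x) := by
  set τ := |ρ.im| with hτ
  set φ : ℝ → ℝ := fun x => Complex.abs (u x) * Real.exp (-(τ * x)) with hφ
  have hφcont : Continuous φ :=
    (Complex.continuous_abs.comp hucont).mul (Real.continuous_exp.comp (by fun_prop))
  obtain ⟨z, hz, hmax⟩ := isCompact_Icc.exists_isMaxOn (s := Set.Icc (0:ℝ) 1)
    (Set.nonempty_Icc.2 zero_le_one) hφcont.continuousOn
  set M := φ z with hM
  have hMnn : 0 ≤ M := mul_nonneg (Complex.abs.nonneg _) (Real.exp_pos _).le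
  have hubd : ∀ σ ∈ Set.Icc (0:ℝ) 1, Complex.abs (u σ) ≤ M * Real.exp (τ * σ) := by
    intro σ hσ
    have h1 : φ σ ≤ M := hmax hσ
    have h2 : Complex.abs (u σ) = φ σ * Real.exp (τ * σ) := by
      show Complex.abs (u σ) = Complex.abs (u σ) * Real.exp (-(τ * σ)) * Real.exp (τ * σ)
      rw [mul_assoc, ← Real.exp_add]
      simp
    rw [h2]
    exact mul_le_mul_of_nonneg_right h1 (Real.exp_pos _).le
  -- bound M
  have hMle : M ≤ β + (A / Complex.abs ρ) * M := by
    have h1 := hvol z hz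
    have h2 : ∫ σ in (0:ℝ)..z, Real.exp (τ * (z - σ)) * (|V σ| * Complex.abs (u σ))
        ≤ ∫ σ in (0:ℝ)..z, (M * Real.exp (τ * z)) * |V σ| := by
      apply intervalIntegral.integral_mono_on hz.1
      · apply intVR' V hVm hVi (fun σ : ℝ => Real.exp (τ * (z - σ)) * Complex.abs (u σ))
        · exact (Real.continuous_exp.comp (by fun_prop)).mul (Complex.continuous_abs.comp hucont)
        · intro t; ring
      · exact ((hVi 0 z).abs.const_mul _)
      · intro σ hσ
        have h3 : σ ∈ Set.Icc (0:ℝ) 1 := ⟨hσ.1, hσ.2.trans hz.2⟩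
        calc Real.exp (τ * (z - σ)) * (|V σ| * Complex.abs (u σ))
            ≤ Real.exp (τ * (z - σ)) * (|V σ| * (M * Real.exp (τ * σ))) := by
              apply mul_le_mul_of_nonneg_left _ (Real.exp_pos _).le
              exact mul_le_mul_of_nonneg_left (hubd σ h3) (abs_nonneg _)
          _ = (M * Real.exp (τ * z)) * |V σ| := by
              rw [show Real.exp (τ * (z - σ)) * (|V σ| * (M * Real.exp (τ * σ)))
                = M * (Real.exp (τ * (z - σ)) * Real.exp (τ * σ)) * |V σ| by ring,
                ← Real.exp_add]
              ring_nf
    have h4 : ∫ σ in (0:ℝ)..z, (M * Real.exp (τ * z)) * |V σ|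
        = (M * Real.exp (τ * z)) * ∫ σ in (0:ℝ)..z, |V σ| :=
      intervalIntegral.integral_const_mul _ _
    have h5 : (M * Real.exp (τ * z)) * (∫ σ in (0:ℝ)..z, |V σ|)
        ≤ (M * Real.exp (τ * z)) * A :=
      mul_le_mul_of_nonneg_left (hA z hz) (by positivity)
    have h6 : Complex.abs (u z) ≤ β * Real.exp (τ * z)
        + (1 / Complex.abs ρ) * ((M * Real.exp (τ * z)) * A) := by
      calc Complex.abs (u z) ≤ β * Real.exp (τ * z) + (1 / Complex.abs ρ) *
            ∫ σ in (0:ℝ)..z, Real.exp (τ * (z - σ)) * (|V σ| * Complex.abs (u σ)) := h1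
        _ ≤ β * Real.exp (τ * z) + (1 / Complex.abs ρ) * ((M * Real.exp (τ * z)) * A) := by
            apply add_le_add_right
            apply mul_le_mul_of_nonneg_left _ (by positivity)
            rw [h4] at h2
            exact h2.trans h5
    -- divide by exp(τ z)
    have h7 : M * Real.exp (τ * z) = Complex.abs (u z) := by
      show Complex.abs (u z) * Real.exp (-(τ * z)) * Real.exp (τ * z) = Complex.abs (u z)
      rw [mul_assoc, ← Real.exp_add]
      simp
    have hepos : (0:ℝ) < Real.exp (τ * z) := Real.exp_pos _
    have h8 : M * Real.exp (τ * z) ≤ (β + (A / Complex.abs ρ) * M) * Real.exp (τ * z) := by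
      rw [h7]
      calc Complex.abs (u z) ≤ β * Real.exp (τ * z)
            + (1 / Complex.abs ρ) * ((M * Real.exp (τ * z)) * A) := h6
        _ = (β + (A / Complex.abs ρ) * M) * Real.exp (τ * z) := by
            field_simp
    exact le_of_mul_le_mul_right h8 hepos
  have hM2 : M ≤ 2 * β := by nlinarith
  intro x hx
  calc Complex.abs (u x) ≤ M * Real.exp (τ * x) := hubd x hx
    _ ≤ 2 * β * Real.exp (τ * x) := mul_le_mul_of_nonneg_right hM2 (Real.exp_pos _).le

/-- bound for WW given a sup bound on u -/
lemma WW_le (V : ℝ → ℝ) (ρ : ℂ) (hρ : ρ ≠ 0) (hVm : Measurable V)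
    (hVi : ∀ a b : ℝ, IntervalIntegrable V volume a b)
    (u : ℝ → ℂ) (hucont : Continuous u) (β2 : ℝ) (hβ2 : 0 ≤ β2)
    (A : ℝ) (hA : ∀ x ∈ Set.Icc (0:ℝ) 1, (∫ t in (0:ℝ)..x, |V t|) ≤ A)
    (hubd : ∀ σ ∈ Set.Icc (0:ℝ) 1, Complex.abs (u σ) ≤ β2 * Real.exp (|ρ.im| * σ))
    (x : ℝ) (hx : x ∈ Set.Icc (0:ℝ) 1) :
    Complex.abs (WW V ρ u x) ≤ (β2 * A / Complex.abs ρ) * Real.exp (|ρ.im| * x) := by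
  set τ := |ρ.im| with hτ
  have haρ : 0 < Complex.abs ρ := Complex.abs.pos hρ
  have h1 := WW_bound V ρ hρ hVm hVi u hucont x hx
  have h2 : ∫ σ in (0:ℝ)..x, Real.exp (τ * (x - σ)) * (|V σ| * Complex.abs (u σ))
      ≤ ∫ σ in (0:ℝ)..x, (β2 * Real.exp (τ * x)) * |V σ| := by
    apply intervalIntegral.integral_mono_on hx.1
    · apply intVR' V hVm hVi (fun σ : ℝ => Real.exp (τ * (x - σ)) * Complex.abs (u σ))
      · exact (Real.continuous_exp.comp (by fun_prop)).mul (Complex.continuous_abs.comp hucont)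
      · intro t; ring
    · exact ((hVi 0 x).abs.const_mul _)
    · intro σ hσ
      have h3 : σ ∈ Set.Icc (0:ℝ) 1 := ⟨hσ.1, hσ.2.trans hx.2⟩
      calc Real.exp (τ * (x - σ)) * (|V σ| * Complex.abs (u σ))
          ≤ Real.exp (τ * (x - σ)) * (|V σ| * (β2 * Real.exp (τ * σ))) := by
            apply mul_le_mul_of_nonneg_left _ (Real.exp_pos _).le
            exact mul_le_mul_of_nonneg_left (hubd σ h3) (abs_nonneg _)
        _ = (β2 * (Real.exp (τ * (x - σ)) * Real.exp (τ * σ))) * |V σ| := by ring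
        _ = (β2 * Real.exp (τ * x)) * |V σ| := by
            rw [← Real.exp_add]
            ring_nf
  have h4 : ∫ σ in (0:ℝ)..x, (β2 * Real.exp (τ * x)) * |V σ|
      = (β2 * Real.exp (τ * x)) * ∫ σ in (0:ℝ)..x, |V σ| :=
    intervalIntegral.integral_const_mul _ _
  have h5 : (β2 * Real.exp (τ * x)) * (∫ σ in (0:ℝ)..x, |V σ|)
      ≤ (β2 * Real.exp (τ * x)) * A :=
    mul_le_mul_of_nonneg_left (hA x hx) (by positivity)
  calc Complex.abs (WW V ρ u x)
      ≤ (1 / Complex.abs ρ) * ∫ σ in (0:ℝ)..x, Real.exp (τ * (x - σ)) * (|V σ| * Complex.abs (u σ)) := h1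
    _ ≤ (1 / Complex.abs ρ) * ((β2 * Real.exp (τ * x)) * A) := by
        apply mul_le_mul_of_nonneg_left _ (by positivity)
        rw [h4] at h2
        exact h2.trans h5
    _ = (β2 * A / Complex.abs ρ) * Real.exp (τ * x) := by field_simp






set_option maxHeartbeats 1000000 in
lemma sprime_formula (V : ℝ → ℝ) (ρ : ℂ) (hρ : ρ ≠ 0)
    (hVm : Measurable V) (hVi : ∀ a b : ℝ, IntervalIntegrable V volume a b)
    (u u' : ℝ → ℂ) (hu : ∀ x, HasDerivAt u (u' x) x)
    (hui : ∀ x, u' x = u' 0 + ∫ t in (0:ℝ)..x, ((V t : ℂ) - ρ ^ 2) * u t)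
    (hu'0 : u' 0 = 1)
    (huv : ∀ x ∈ Set.Icc (0:ℝ) 1, u x = Complex.sin (ρ * x) / ρ + WW V ρ u x) :
    u' 1 = Complex.cos (ρ * (1:ℝ))
      + (Complex.cos (ρ * (1:ℝ)) * FF V ρ u 1 + Complex.sin (ρ * (1:ℝ)) * GG V ρ u 1) := by
  have hucont : Continuous u := by
    rw [continuous_iff_continuousAt]; exact fun x => (hu x).continuousAt
  set g : ℝ → ℂ := fun t => ((V t : ℂ) - ρ ^ 2) * u t with hgdef
  have hg1int : ∀ a b : ℝ, IntervalIntegrable (g1 V ρ u) volume a b :=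
    intVC V hVm hVi _ ((cont_ccos ρ).mul hucont)
  have hg2int : ∀ a b : ℝ, IntervalIntegrable (g2 V ρ u) volume a b :=
    intVC V hVm hVi _ ((cont_csin ρ).mul hucont)
  have hFcont : Continuous (FF V ρ u) := intervalIntegral.continuous_primitive hg1int 0
  have hGcont : Continuous (GG V ρ u) := intervalIntegral.continuous_primitive hg2int 0
  have hWcont : Continuous (WW V ρ u) := cont_WW V ρ hVm hVi u hucont
  -- decompose ∫ g over [0,1]
  have hgdecomp : ∫ t in (0:ℝ)..1, g t
      = (∫ t in (0:ℝ)..1, (V t : ℂ) * u t) - ρ ^ 2 * ∫ t in (0:ℝ)..1, u t := by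
    have e7 : (fun t : ℝ => g t) = fun t : ℝ => (V t : ℂ) * u t - ρ ^ 2 * u t := by
      funext t; simp only [hgdef]; ring
    rw [e7, intervalIntegral.integral_sub (intVC V hVm hVi u hucont 0 1)
      ((continuous_const.fun_mul hucont).intervalIntegrable 0 1),
      intervalIntegral.integral_const_mul]
  -- ∫ u over [0,1]
  have hintu : ∫ t in (0:ℝ)..1, u t
      = ∫ t in (0:ℝ)..1, (Complex.sin (ρ * t) / ρ + WW V ρ u t) := by
    apply intervalIntegral.integral_congr
    intro t ht
    rw [Set.uIcc_of_le zero_le_one] at ht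
    exact huv t ht
  have hsin01 : ∫ t in (0:ℝ)..1, Complex.sin (ρ * t) / ρ
      = (Complex.cos (ρ * (0:ℝ)) - Complex.cos (ρ * (1:ℝ))) / ρ ^ 2 := by
    have e : (fun t : ℝ => Complex.sin (ρ * t) / ρ) = fun t : ℝ => (1/ρ) * Complex.sin (ρ * t) := by
      funext t; ring
    rw [e, intervalIntegral.integral_const_mul, int_csin ρ hρ 0 1]
    ring
  -- ∫ WW over [0,1]
  have hintW : ∫ t in (0:ℝ)..1, WW V ρ u t
      = (1/ρ^2) * (∫ t in (0:ℝ)..1, (V t : ℂ) * u t)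
        - ((1/ρ^2) * (Complex.cos (ρ * (1:ℝ)) * FF V ρ u 1)
          + (1/ρ^2) * (Complex.sin (ρ * (1:ℝ)) * GG V ρ u 1)) := by
    have e2 : (fun t : ℝ => WW V ρ u t)
        = fun t : ℝ => (1/ρ) * (Complex.sin (ρ * t) * FF V ρ u t)
          - (1/ρ) * (Complex.cos (ρ * t) * GG V ρ u t) := by
      funext t; simp only [WW]; ring
    rw [e2, intervalIntegral.integral_sub
      ((((cont_csin ρ).fun_mul hFcont).intervalIntegrable 0 1).const_mul _)
      ((((cont_ccos ρ).fun_mul hGcont).intervalIntegrable 0 1).const_mul _),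
      intervalIntegral.integral_const_mul, intervalIntegral.integral_const_mul]
    rw [show (FF V ρ u : ℝ → ℂ) = fun t => ∫ σ in (0:ℝ)..t, g1 V ρ u σ from rfl,
        show (GG V ρ u : ℝ → ℂ) = fun t => ∫ σ in (0:ℝ)..t, g2 V ρ u σ from rfl]
    rw [tri_fub (g1 V ρ u) _ 1 zero_le_one ((hg1int 0 1).1)
        (((cont_csin ρ).intervalIntegrable 0 1).1),
      tri_fub (g2 V ρ u) _ 1 zero_le_one ((hg2int 0 1).1)
        (((cont_ccos ρ).intervalIntegrable 0 1).1)]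
    have e3 : ∫ σ in (0:ℝ)..1, (∫ t in σ..1, Complex.sin (ρ * t)) * g1 V ρ u σ
        = ∫ σ in (0:ℝ)..1, ((Complex.cos (ρ * σ) - Complex.cos (ρ * (1:ℝ))) / ρ) * g1 V ρ u σ := by
      apply intervalIntegral.integral_congr
      intro σ _
      show (∫ t in σ..1, Complex.sin (ρ * t)) * g1 V ρ u σ = _
      rw [int_csin ρ hρ σ 1]
    have e4 : ∫ σ in (0:ℝ)..1, (∫ t in σ..1, Complex.cos (ρ * t)) * g2 V ρ u σ
        = ∫ σ in (0:ℝ)..1, ((Complex.sin (ρ * (1:ℝ)) - Complex.sin (ρ * σ)) / ρ) * g2 V ρ u σ := by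
      apply intervalIntegral.integral_congr
      intro σ _
      show (∫ t in σ..1, Complex.cos (ρ * t)) * g2 V ρ u σ = _
      rw [int_ccos ρ hρ σ 1]
    rw [e3, e4]
    have hK1int : IntervalIntegrable (fun σ : ℝ =>
        ((Complex.cos (ρ * σ) - Complex.cos (ρ * (1:ℝ))) / ρ) * g1 V ρ u σ) volume 0 1 := by
      apply intVC' V hVm hVi (fun σ : ℝ =>
        ((Complex.cos (ρ * σ) - Complex.cos (ρ * (1:ℝ))) / ρ) * (Complex.cos (ρ * σ) * u σ))
      · fun_prop
      · intro t; simp only [g1]; ring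
    have hK2int : IntervalIntegrable (fun σ : ℝ =>
        ((Complex.sin (ρ * (1:ℝ)) - Complex.sin (ρ * σ)) / ρ) * g2 V ρ u σ) volume 0 1 := by
      apply intVC' V hVm hVi (fun σ : ℝ =>
        ((Complex.sin (ρ * (1:ℝ)) - Complex.sin (ρ * σ)) / ρ) * (Complex.sin (ρ * σ) * u σ))
      · fun_prop
      · intro t; simp only [g2]; ring
    rw [← intervalIntegral.integral_const_mul, ← intervalIntegral.integral_const_mul,
      ← intervalIntegral.integral_sub (hK1int.const_mul _) (hK2int.const_mul _)]
    have e5 : ∀ σ : ℝ,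
        (1/ρ) * (((Complex.cos (ρ * σ) - Complex.cos (ρ * (1:ℝ))) / ρ) * g1 V ρ u σ)
        - (1/ρ) * (((Complex.sin (ρ * (1:ℝ)) - Complex.sin (ρ * σ)) / ρ) * g2 V ρ u σ)
        = (1/ρ^2) * ((V σ : ℂ) * u σ)
          - ((1/ρ^2) * (Complex.cos (ρ * (1:ℝ)) * g1 V ρ u σ)
            + (1/ρ^2) * (Complex.sin (ρ * (1:ℝ)) * g2 V ρ u σ)) := by
      intro σ
      have pyth := Complex.sin_sq_add_cos_sq (ρ * σ)
      simp only [g1, g2]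
      field_simp
      linear_combination (V σ : ℂ) * u σ * pyth
    rw [intervalIntegral.integral_congr (fun σ _ => e5 σ)]
    rw [intervalIntegral.integral_sub ((intVC V hVm hVi u hucont 0 1).const_mul _)
      ((((hg1int 0 1).const_mul _).const_mul _).add (((hg2int 0 1).const_mul _).const_mul _)),
      intervalIntegral.integral_add (((hg1int 0 1).const_mul _).const_mul _)
        (((hg2int 0 1).const_mul _).const_mul _)]
    simp only [intervalIntegral.integral_const_mul]
  -- assemble
  have h1 := hui 1
  rw [hu'0] at h1
  have h2 : ∫ t in (0:ℝ)..1, (Complex.sin (ρ * t) / ρ + WW V ρ u t)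
      = (∫ t in (0:ℝ)..1, Complex.sin (ρ * t) / ρ) + ∫ t in (0:ℝ)..1, WW V ρ u t :=
    intervalIntegral.integral_add (((cont_csin ρ).div_const ρ).intervalIntegrable 0 1)
      (hWcont.intervalIntegrable 0 1)
  rw [show intervalIntegral g 0 1 volume = ∫ t in (0:ℝ)..1, g t from rfl, hgdecomp, hintu, h2,
    hsin01, hintW] at h1
  rw [h1]
  simp only [Complex.ofReal_zero, mul_zero, Complex.cos_zero]
  generalize (∫ t in (0:ℝ)..1, (V t : ℂ) * u t) = I
  generalize FF V ρ u 1 = Fx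
  generalize GG V ρ u 1 = Gx
  generalize Complex.cos (ρ * (1:ℝ)) = C
  generalize Complex.sin (ρ * (1:ℝ)) = S
  field_simp
  ring



end DiscHelper

open DiscHelper in
set_option maxHeartbeats 1000000 in
/-- The discriminant expansion `D(E) = 2cos ρ + (sin ρ/ρ)∫₀¹V0 + f(ρ)` with
`|f(ρ)| ≤ 4A²e^{|τ|}/|ρ|²`, for `E = ρ²`, `|ρ| > max{1, 2A}`. -/
theorem discriminant_expansion
    (V0 : ℝ → ℝ) (hV0per : Function.Periodic V0 1) (hV0meas : Measurable V0)
    (hV0L2 : ∀ a b : ℝ, IntervalIntegrable (fun x => V0 x ^ 2) volume a b)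
    (A : ℝ) (hA : A = ∫ x in (0:ℝ)..1, |V0 x|)
    (ρ : ℂ) (hρ : max 1 (2 * A) < ‖ρ‖)
    (c c' s s' : ℝ → ℂ)
    (hcderiv : ∀ x, HasDerivAt c (c' x) x)
    (hcint : ∀ x, c' x = c' 0 + ∫ t in (0:ℝ)..x, ((V0 t : ℂ) - ρ ^ 2) * c t)
    (hc0 : c 0 = 1) (hc'0 : c' 0 = 0)
    (hsderiv : ∀ x, HasDerivAt s (s' x) x)
    (hsint : ∀ x, s' x = s' 0 + ∫ t in (0:ℝ)..x, ((V0 t : ℂ) - ρ ^ 2) * s t)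
    (hs0 : s 0 = 0) (hs'0 : s' 0 = 1) :
    ‖c 1 + s' 1 - 2 * Complex.cos ρ -
        Complex.sin ρ / ρ * ((∫ t in (0:ℝ)..1, V0 t : ℝ) : ℂ)‖ ≤
      4 * A ^ 2 * Real.exp |ρ.im| / ‖ρ‖ ^ 2 := by
  change Complex.abs (c 1 + s' 1 - 2 * Complex.cos ρ -
        Complex.sin ρ / ρ * ((∫ t in (0:ℝ)..1, V0 t : ℝ) : ℂ)) ≤
      4 * A ^ 2 * Real.exp |ρ.im| / Complex.abs ρ ^ 2
  change max 1 (2 * A) < Complex.abs ρ at hρ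
  have hAnn : 0 ≤ A := by
    rw [hA]; exact intervalIntegral.integral_nonneg zero_le_one (fun u _ => abs_nonneg _)
  have haρ1 : 1 < Complex.abs ρ := lt_of_le_of_lt (le_max_left _ _) hρ
  have haρ : 0 < Complex.abs ρ := by linarith
  have hρne : ρ ≠ 0 := by
    intro h; rw [h] at haρ1; simp at haρ1; linarith
  have h2A : 2 * A < Complex.abs ρ := lt_of_le_of_lt (le_max_right _ _) hρ
  have hhalf : A / Complex.abs ρ ≤ 1 / 2 := by
    rw [div_le_iff₀ haρ]; linarith
  have hVi : ∀ a b : ℝ, IntervalIntegrable V0 volume a b := intV_of_L2 V0 hV0meas hV0L2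
  set τ := |ρ.im| with hτ
  have hAx : ∀ x ∈ Set.Icc (0:ℝ) 1, (∫ t in (0:ℝ)..x, |V0 t|) ≤ A := by
    intro x hx
    rw [hA]
    apply intervalIntegral.integral_mono_interval le_rfl hx.1 hx.2 ?_ ((hVi 0 1).abs)
    filter_upwards with t using abs_nonneg _
  have hccont : Continuous c := by
    rw [continuous_iff_continuousAt]; exact fun x => (hcderiv x).continuousAt
  have hscont : Continuous s := by
    rw [continuous_iff_continuousAt]; exact fun x => (hsderiv x).continuousAt
  -- Volterra integral forms
  have hcx : ∀ x ∈ Set.Icc (0:ℝ) 1, c x = Complex.cos (ρ * x) + WW V0 ρ c x := by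
    intro x hx
    have h1 := volterra_trig V0 ρ hρne hV0meas hVi c c' hcderiv hcint x hx
    rw [hc0, hc'0] at h1
    simpa using h1
  have hsx : ∀ x ∈ Set.Icc (0:ℝ) 1, s x = Complex.sin (ρ * x) / ρ + WW V0 ρ s x := by
    intro x hx
    have h1 := volterra_trig V0 ρ hρne hV0meas hVi s s' hsderiv hsint x hx
    rw [hs0, hs'0] at h1
    simpa using h1
  -- exponential bound for trig with real multiple
  have habs_cos : ∀ x : ℝ, 0 ≤ x → Complex.abs (Complex.cos (ρ * x)) ≤ Real.exp (τ * x) := by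
    intro x hx
    have h1 := abs_cos_le (ρ * x)
    have e1 : (ρ * (x:ℂ)).im = ρ.im * x := by simp [Complex.mul_im]
    rw [e1] at h1
    calc Complex.abs (Complex.cos (ρ * x)) ≤ Real.exp |ρ.im * x| := h1
      _ = Real.exp (τ * x) := by rw [abs_mul, abs_of_nonneg hx]
  have habs_sin : ∀ x : ℝ, 0 ≤ x → Complex.abs (Complex.sin (ρ * x)) ≤ Real.exp (τ * x) := by
    intro x hx
    have h1 := abs_sin_le (ρ * x)
    have e1 : (ρ * (x:ℂ)).im = ρ.im * x := by simp [Complex.mul_im]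
    rw [e1] at h1
    calc Complex.abs (Complex.sin (ρ * x)) ≤ Real.exp |ρ.im * x| := h1
      _ = Real.exp (τ * x) := by rw [abs_mul, abs_of_nonneg hx]
  -- sup bounds
  have hcb : ∀ x ∈ Set.Icc (0:ℝ) 1, Complex.abs (c x) ≤ 2 * Real.exp (τ * x) := by
    have h1 := apriori V0 ρ hV0meas hVi c hccont 1 A hAx hhalf haρ hAnn ?_
    · intro x hx
      have := h1 x hx
      linarith [this]
    · intro x hx
      rw [hcx x hx]
      calc Complex.abs (Complex.cos (ρ * x) + WW V0 ρ c x)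
          ≤ Complex.abs (Complex.cos (ρ * x)) + Complex.abs (WW V0 ρ c x) :=
            Complex.abs.add_le _ _
        _ ≤ 1 * Real.exp (τ * x) + (1 / Complex.abs ρ) *
            ∫ σ in (0:ℝ)..x, Real.exp (τ * (x - σ)) * (|V0 σ| * Complex.abs (c σ)) := by
            apply add_le_add
            · rw [one_mul]; exact habs_cos x hx.1
            · exact WW_bound V0 ρ hρne hV0meas hVi c hccont x hx
  have hsb : ∀ x ∈ Set.Icc (0:ℝ) 1, Complex.abs (s x) ≤ 2 * (1 / Complex.abs ρ) * Real.exp (τ * x) := by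
    apply apriori V0 ρ hV0meas hVi s hscont (1 / Complex.abs ρ) A hAx hhalf haρ hAnn
    intro x hx
    rw [hsx x hx]
    calc Complex.abs (Complex.sin (ρ * x) / ρ + WW V0 ρ s x)
        ≤ Complex.abs (Complex.sin (ρ * x) / ρ) + Complex.abs (WW V0 ρ s x) :=
          Complex.abs.add_le _ _
      _ ≤ (1 / Complex.abs ρ) * Real.exp (τ * x) + (1 / Complex.abs ρ) *
          ∫ σ in (0:ℝ)..x, Real.exp (τ * (x - σ)) * (|V0 σ| * Complex.abs (s σ)) := by
          apply add_le_add
          · rw [map_div₀, div_eq_mul_inv, mul_comm, one_div]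
            exact mul_le_mul_of_nonneg_left (habs_sin x hx.1) (by positivity)
          · exact WW_bound V0 ρ hρne hV0meas hVi s hscont x hx
  -- remainder bounds
  have hrc : ∀ x ∈ Set.Icc (0:ℝ) 1,
      Complex.abs (WW V0 ρ c x) ≤ (2 * A / Complex.abs ρ) * Real.exp (τ * x) :=
    WW_le V0 ρ hρne hV0meas hVi c hccont 2 (by norm_num) A hAx hcb
  have hrs : ∀ x ∈ Set.Icc (0:ℝ) 1,
      Complex.abs (WW V0 ρ s x) ≤ (2 * A / Complex.abs ρ ^ 2) * Real.exp (τ * x) := by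
    intro x hx
    have h1 := WW_le V0 ρ hρne hV0meas hVi s hscont (2 * (1 / Complex.abs ρ)) (by positivity)
      A hAx hsb x hx
    calc Complex.abs (WW V0 ρ s x)
        ≤ (2 * (1 / Complex.abs ρ) * A / Complex.abs ρ) * Real.exp (τ * x) := h1
      _ = (2 * A / Complex.abs ρ ^ 2) * Real.exp (τ * x) := by
          rw [pow_two]
          ring
  -- formulas at 1
  have hs'1 := sprime_formula V0 ρ hρne hV0meas hVi s s' hsderiv hsint hs'0 hsx
  have hc1 : c 1 = Complex.cos (ρ * (1:ℝ)) + WW V0 ρ c 1 := hcx 1 ⟨zero_le_one, le_rfl⟩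
  -- kernels
  set Kc : ℝ → ℂ := fun σ => (Complex.sin (ρ * (1:ℝ)) * Complex.cos (ρ * σ)
    - Complex.cos (ρ * (1:ℝ)) * Complex.sin (ρ * σ)) / ρ with hKc
  set Ks : ℝ → ℂ := fun σ => Complex.cos (ρ * (1:ℝ)) * Complex.cos (ρ * σ)
    + Complex.sin (ρ * (1:ℝ)) * Complex.sin (ρ * σ) with hKs
  have hKccont : Continuous Kc := by rw [hKc]; fun_prop
  have hKscont : Continuous Ks := by rw [hKs]; fun_prop
  have hWccont := cont_WW V0 ρ hV0meas hVi c hccont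
  have hWscont := cont_WW V0 ρ hV0meas hVi s hscont
  have i1 : ∀ a b : ℝ, IntervalIntegrable (g1 V0 ρ c) volume a b :=
    intVC V0 hV0meas hVi _ ((cont_ccos ρ).mul hccont)
  have i2 : ∀ a b : ℝ, IntervalIntegrable (g2 V0 ρ c) volume a b :=
    intVC V0 hV0meas hVi _ ((cont_csin ρ).mul hccont)
  have i3 : ∀ a b : ℝ, IntervalIntegrable (g1 V0 ρ s) volume a b :=
    intVC V0 hV0meas hVi _ ((cont_ccos ρ).mul hscont)
  have i4 : ∀ a b : ℝ, IntervalIntegrable (g2 V0 ρ s) volume a b :=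
    intVC V0 hV0meas hVi _ ((cont_csin ρ).mul hscont)
  have i5 : ∀ a b : ℝ, IntervalIntegrable (fun σ : ℝ => (V0 σ : ℂ)) volume a b := by
    have := intVC V0 hV0meas hVi (fun _ => (1:ℂ)) continuous_const
    simpa using this
  -- sum of explicit integrals
  have hsum : ∫ σ in (0:ℝ)..1,
      ((Complex.sin (ρ*(1:ℝ))/ρ) * g1 V0 ρ c σ - (Complex.cos (ρ*(1:ℝ))/ρ) * g2 V0 ρ c σ
        + (Complex.cos (ρ*(1:ℝ)) * g1 V0 ρ s σ + Complex.sin (ρ*(1:ℝ)) * g2 V0 ρ s σ)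
        - (Complex.sin (ρ*(1:ℝ))/ρ) * (V0 σ : ℂ))
      = ((Complex.sin (ρ*(1:ℝ))/ρ) * FF V0 ρ c 1 - (Complex.cos (ρ*(1:ℝ))/ρ) * GG V0 ρ c 1
        + (Complex.cos (ρ*(1:ℝ)) * FF V0 ρ s 1 + Complex.sin (ρ*(1:ℝ)) * GG V0 ρ s 1)
        - (Complex.sin (ρ*(1:ℝ))/ρ) * ((∫ t in (0:ℝ)..1, V0 t : ℝ) : ℂ)) := by
    rw [intervalIntegral.integral_sub
      ((((i1 0 1).const_mul _).sub ((i2 0 1).const_mul _)).add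
        (((i3 0 1).const_mul _).add ((i4 0 1).const_mul _)))
      ((i5 0 1).const_mul _),
      intervalIntegral.integral_add
        (((i1 0 1).const_mul _).sub ((i2 0 1).const_mul _))
        (((i3 0 1).const_mul _).add ((i4 0 1).const_mul _)),
      intervalIntegral.integral_sub ((i1 0 1).const_mul _) ((i2 0 1).const_mul _),
      intervalIntegral.integral_add ((i3 0 1).const_mul _) ((i4 0 1).const_mul _)]
    simp only [intervalIntegral.integral_const_mul]
    rw [intervalIntegral.integral_ofReal]
    rfl
  -- pointwise identity on [0,1]
  have hpt : Set.EqOn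
      (fun σ : ℝ =>
        ((Complex.sin (ρ*(1:ℝ))/ρ) * g1 V0 ρ c σ - (Complex.cos (ρ*(1:ℝ))/ρ) * g2 V0 ρ c σ
          + (Complex.cos (ρ*(1:ℝ)) * g1 V0 ρ s σ + Complex.sin (ρ*(1:ℝ)) * g2 V0 ρ s σ)
          - (Complex.sin (ρ*(1:ℝ))/ρ) * (V0 σ : ℂ)))
      (fun σ : ℝ => (V0 σ : ℂ) * (Kc σ * WW V0 ρ c σ + Ks σ * WW V0 ρ s σ))
      (Set.uIcc (0:ℝ) 1) := by
    intro σ hσ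
    rw [Set.uIcc_of_le zero_le_one] at hσ
    show ((Complex.sin (ρ*(1:ℝ))/ρ) * g1 V0 ρ c σ - (Complex.cos (ρ*(1:ℝ))/ρ) * g2 V0 ρ c σ
          + (Complex.cos (ρ*(1:ℝ)) * g1 V0 ρ s σ + Complex.sin (ρ*(1:ℝ)) * g2 V0 ρ s σ)
          - (Complex.sin (ρ*(1:ℝ))/ρ) * (V0 σ : ℂ))
        = (V0 σ : ℂ) * (Kc σ * WW V0 ρ c σ + Ks σ * WW V0 ρ s σ)
    simp only [g1, g2, hKc, hKs]
    rw [hcx σ hσ, hsx σ hσ]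
    have pyth := Complex.sin_sq_add_cos_sq (ρ * σ)
    field_simp
    linear_combination (V0 σ : ℂ) * Complex.sin (ρ * ((1:ℝ):ℂ)) * pyth
  -- the remainder identity
  have hone : Complex.cos (ρ * ((1:ℝ):ℂ)) = Complex.cos ρ := by norm_num
  have hone' : Complex.sin (ρ * ((1:ℝ):ℂ)) = Complex.sin ρ := by norm_num
  have hsum2 := hsum
  rw [intervalIntegral.integral_congr hpt] at hsum2
  have hΔ : c 1 + s' 1 - 2 * Complex.cos ρ -
      Complex.sin ρ / ρ * ((∫ t in (0:ℝ)..1, V0 t : ℝ) : ℂ)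
      = ∫ σ in (0:ℝ)..1, (V0 σ : ℂ) * (Kc σ * WW V0 ρ c σ + Ks σ * WW V0 ρ s σ) := by
    rw [hc1, hs'1]
    simp only [WW] at *
    rw [hone, hone'] at hsum2 ⊢
    linear_combination -hsum2
  rw [hΔ]
  -- final bound
  have hKcb : ∀ σ ∈ Set.Icc (0:ℝ) 1,
      Complex.abs (Kc σ) ≤ Real.exp (τ * (1 - σ)) / Complex.abs ρ := by
    intro σ hσ
    have e1 : Kc σ = Complex.sin (ρ * (1:ℝ) - ρ * σ) / ρ := by
      rw [hKc]; simp only [Complex.sin_sub]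
    rw [e1, map_div₀]
    gcongr
    have h2 := abs_sin_le (ρ * (1:ℝ) - ρ * σ)
    have e2 : ((ρ * ((1:ℝ):ℂ)) - ρ * (σ:ℂ)).im = ρ.im * (1 - σ) := by
      simp [Complex.sub_im, Complex.mul_im]
      ring
    rw [e2] at h2
    calc Complex.abs (Complex.sin (ρ * (1:ℝ) - ρ * σ)) ≤ Real.exp |ρ.im * (1 - σ)| := h2
      _ = Real.exp (τ * (1 - σ)) := by rw [abs_mul, abs_of_nonneg (show (0:ℝ) ≤ 1 - σ by linarith [hσ.2])]
  have hKsb : ∀ σ ∈ Set.Icc (0:ℝ) 1, Complex.abs (Ks σ) ≤ Real.exp (τ * (1 - σ)) := by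
    intro σ hσ
    have e1 : Ks σ = Complex.cos (ρ * (1:ℝ) - ρ * σ) := by
      rw [hKs]; simp only [Complex.cos_sub]
    rw [e1]
    have h2 := abs_cos_le (ρ * (1:ℝ) - ρ * σ)
    have e2 : ((ρ * ((1:ℝ):ℂ)) - ρ * (σ:ℂ)).im = ρ.im * (1 - σ) := by
      simp [Complex.sub_im, Complex.mul_im]
      ring
    rw [e2] at h2
    calc Complex.abs (Complex.cos (ρ * (1:ℝ) - ρ * σ)) ≤ Real.exp |ρ.im * (1 - σ)| := h2
      _ = Real.exp (τ * (1 - σ)) := by rw [abs_mul, abs_of_nonneg (show (0:ℝ) ≤ 1 - σ by linarith [hσ.2])]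
  have hKint : IntervalIntegrable
      (fun σ : ℝ => (V0 σ : ℂ) * (Kc σ * WW V0 ρ c σ + Ks σ * WW V0 ρ s σ)) volume 0 1 :=
    intVC V0 hV0meas hVi _ ((hKccont.mul hWccont).add (hKscont.mul hWscont)) 0 1
  have hb1 : Complex.abs (∫ σ in (0:ℝ)..1, (V0 σ : ℂ) * (Kc σ * WW V0 ρ c σ + Ks σ * WW V0 ρ s σ))
      ≤ ∫ σ in (0:ℝ)..1, Complex.abs ((V0 σ : ℂ) * (Kc σ * WW V0 ρ c σ + Ks σ * WW V0 ρ s σ)) := by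
    exact intervalIntegral.norm_integral_le_integral_norm
      (f := fun σ : ℝ => (V0 σ : ℂ) * (Kc σ * WW V0 ρ c σ + Ks σ * WW V0 ρ s σ)) zero_le_one
  have hb2 : ∫ σ in (0:ℝ)..1, Complex.abs ((V0 σ : ℂ) * (Kc σ * WW V0 ρ c σ + Ks σ * WW V0 ρ s σ))
      ≤ ∫ σ in (0:ℝ)..1, |V0 σ| * (4 * A * Real.exp τ / Complex.abs ρ ^ 2) := by
    apply intervalIntegral.integral_mono_on zero_le_one
    · exact hKint.norm
    · exact ((hVi 0 1).abs).mul_const _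
    · intro σ hσ
      rw [map_mul, Complex.abs_ofReal]
      have he : Real.exp (τ * (1 - σ)) * Real.exp (τ * σ) = Real.exp τ := by
        rw [← Real.exp_add]; ring_nf
      have h3 : Complex.abs (Kc σ * WW V0 ρ c σ + Ks σ * WW V0 ρ s σ)
          ≤ 4 * A * Real.exp τ / Complex.abs ρ ^ 2 := by
        calc Complex.abs (Kc σ * WW V0 ρ c σ + Ks σ * WW V0 ρ s σ)
            ≤ Complex.abs (Kc σ) * Complex.abs (WW V0 ρ c σ)
              + Complex.abs (Ks σ) * Complex.abs (WW V0 ρ s σ) := by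
              refine (Complex.abs.add_le _ _).trans ?_
              rw [map_mul, map_mul]
          _ ≤ (Real.exp (τ * (1 - σ)) / Complex.abs ρ) * ((2 * A / Complex.abs ρ) * Real.exp (τ * σ))
              + Real.exp (τ * (1 - σ)) * ((2 * A / Complex.abs ρ ^ 2) * Real.exp (τ * σ)) := by
              apply add_le_add
              · exact mul_le_mul (hKcb σ hσ) (hrc σ hσ) (Complex.abs.nonneg _) (by positivity)
              · exact mul_le_mul (hKsb σ hσ) (hrs σ hσ) (Complex.abs.nonneg _) (by positivity)
          _ = (4 * A / Complex.abs ρ ^ 2) * (Real.exp (τ * (1 - σ)) * Real.exp (τ * σ)) := by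
              rw [pow_two]
              field_simp
              ring
          _ = 4 * A * Real.exp τ / Complex.abs ρ ^ 2 := by rw [he]; ring
      exact mul_le_mul_of_nonneg_left h3 (abs_nonneg _)
  have hb3 : ∫ σ in (0:ℝ)..1, |V0 σ| * (4 * A * Real.exp τ / Complex.abs ρ ^ 2)
      = A * (4 * A * Real.exp τ / Complex.abs ρ ^ 2) := by
    have e : (fun σ : ℝ => |V0 σ| * (4 * A * Real.exp τ / Complex.abs ρ ^ 2))
        = fun σ : ℝ => (4 * A * Real.exp τ / Complex.abs ρ ^ 2) * |V0 σ| := by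
      funext σ; ring
    rw [e, intervalIntegral.integral_const_mul, ← hA]
    ring
  calc Complex.abs (∫ σ in (0:ℝ)..1, (V0 σ : ℂ) * (Kc σ * WW V0 ρ c σ + Ks σ * WW V0 ρ s σ))
      ≤ ∫ σ in (0:ℝ)..1, Complex.abs ((V0 σ : ℂ) * (Kc σ * WW V0 ρ c σ + Ks σ * WW V0 ρ s σ)) := hb1
    _ ≤ ∫ σ in (0:ℝ)..1, |V0 σ| * (4 * A * Real.exp τ / Complex.abs ρ ^ 2) := hb2
    _ = A * (4 * A * Real.exp τ / Complex.abs ρ ^ 2) := hb3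
    _ = 4 * A ^ 2 * Real.exp τ / Complex.abs ρ ^ 2 := by ring
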